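/- The distinct nontrivial Fourier coordinates of the Jukes-Cantor model on an unrooted binary tree T are in bijection with the subforests of T; in particular, the number of distinct 0-1 exponent vectors arising from the monomial parameterization q = ∏_{splits} a^{B|B'}_{Σ_{i∈B} g_i} over states (g₁,...,g_n) ∈ (ℤ₂×ℤ₂)^n with Σg_i = 0 equals the number of subforests of T. -/

import Mathlib

/-- A binary (trivalent) leaf-labelled tree on `n` leaves: an unrooted tree whose
vertex set consists of `n` leaves (of degree 1, labelled by `Fin n`) and `n - 2`
internal vertices (of degree 3). -/
structure BinTree (n : ℕ) where
  G : SimpleGraph (Fin n ⊕ Fin (n - 2))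
  isTree : G.IsTree
  degLeaf : ∀ i : Fin n, (G.neighborSet (Sum.inl i)).ncard = 1
  degInternal : ∀ j : Fin (n - 2), (G.neighborSet (Sum.inr j)).ncard = 3

open scoped Classical

/-- The set of "solid" edges determined by an assignment `g` of elements of
`ℤ₂ × ℤ₂` to the leaves: the edges whose split side sums to a nonidentity
element (the side of an edge at an endpoint `v` consists of the leaves
reachable from `v` after deleting the edge). -/
noncomputable def solidSet {n : ℕ} (T : BinTree n) (g : Fin n → ZMod 2 × ZMod 2) :
    Set (Sym2 (Fin n ⊕ Fin (n - 2))) :=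
  {e | e ∈ T.G.edgeSet ∧ ∃ v, v ∈ e ∧
    (∑ i : Fin n,
      if (T.G.deleteEdges {e}).Reachable v (Sum.inl i) then g i else 0) ≠ 0}

/-- A subforest of the tree: a set of edges forming a disjoint union of
subtrees all of whose degree-one vertices are leaves of the tree, i.e. no
internal vertex of the tree meets exactly one edge of the set. -/
def IsSubforest {n : ℕ} (T : BinTree n) (F : Set (Sym2 (Fin n ⊕ Fin (n - 2)))) : Prop :=
  F ⊆ T.G.edgeSet ∧ ∀ j : Fin (n - 2), {e ∈ F | Sum.inr j ∈ e}.ncard ≠ 1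

namespace JC

abbrev K := ZMod 2 × ZMod 2

lemma addself : ∀ x : K, x + x = 0 := by decide

variable {n : ℕ} (T : BinTree n)

noncomputable def sideSum (g : Fin n → K) (e : Sym2 (Fin n ⊕ Fin (n-2)))
    (v : Fin n ⊕ Fin (n-2)) : K :=
  ∑ i : Fin n, if (T.G.deleteEdges {e}).Reachable v (Sum.inl i) then g i else 0

lemma bridge {e} (he : e ∈ T.G.edgeSet) : T.G.IsBridge e := by
  have := SimpleGraph.isAcyclic_iff_forall_edge_isBridge.mp T.isTree.2
  exact this he

lemma not_reach {a b} (h : T.G.Adj a b) :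
    ¬ (T.G.deleteEdges {s(a,b)}).Reachable a b := by
  have hb := bridge T (show s(a,b) ∈ T.G.edgeSet from h)
  rw [SimpleGraph.isBridge_iff] at hb
  exact hb

lemma reach_or {a b} (h : T.G.Adj a b) (w : Fin n ⊕ Fin (n-2)) :
    (T.G.deleteEdges {s(a,b)}).Reachable a w ∨ (T.G.deleteEdges {s(a,b)}).Reachable b w := by
  have hc : T.G.Reachable a w := T.isTree.1 a w
  obtain ⟨p⟩ := hc
  set G' := T.G.deleteEdges {s(a,b)} with hG'
  have key : ∀ (x y : Fin n ⊕ Fin (n-2)) (p : T.G.Walk x y),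
      (G'.Reachable a x ∨ G'.Reachable b x) → (G'.Reachable a y ∨ G'.Reachable b y) := by
    intro x y p
    induction p with
    | nil => exact id
    | @cons x y _ hxy q ih =>
      intro hx
      by_cases he : s(x,y) = s(a,b)
      · rw [Sym2.eq_iff] at he
        rcases he with ⟨rfl, rfl⟩ | ⟨rfl, rfl⟩
        · exact ih (Or.inr (SimpleGraph.Reachable.refl _))
        · exact ih (Or.inl (SimpleGraph.Reachable.refl _))
      · have hadj : G'.Adj x y := by
          rw [hG', SimpleGraph.deleteEdges_adj]
          exact ⟨hxy, by simpa using he⟩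
        refine ih ?_
        rcases hx with hx | hx
        · exact Or.inl (hx.trans hadj.reachable)
        · exact Or.inr (hx.trans hadj.reachable)
  exact key a w p (Or.inl (SimpleGraph.Reachable.refl _))

lemma not_reach_both {a b w} (h : T.G.Adj a b) :
    ¬ ((T.G.deleteEdges {s(a,b)}).Reachable a w ∧ (T.G.deleteEdges {s(a,b)}).Reachable b w) := by
  rintro ⟨h1, h2⟩
  exact not_reach T h (h1.trans h2.symm)

lemma sideSum_addeq {a b} (h : T.G.Adj a b) (g : Fin n → K) :
    sideSum T g s(a,b) a + sideSum T g s(a,b) b = ∑ i, g i := by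
  rw [sideSum, sideSum, ← Finset.sum_add_distrib]
  refine Finset.sum_congr rfl fun i _ => ?_
  rcases reach_or T h (Sum.inl i) with hr | hr
  · rw [if_pos hr, if_neg, add_zero]
    intro hr2; exact not_reach_both T h ⟨hr, hr2⟩
  · rw [if_neg, if_pos hr, zero_add]
    intro hr2; exact not_reach_both T h ⟨hr2, hr⟩

lemma sideSum_symm {a b} (h : T.G.Adj a b) {g : Fin n → K} (hg : ∑ i, g i = 0) :
    sideSum T g s(a,b) a = sideSum T g s(a,b) b := by
  have h1 := sideSum_addeq T h g
  rw [hg] at h1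
  have := addself (sideSum T g s(a,b) b)
  calc sideSum T g s(a,b) a
      = sideSum T g s(a,b) a + (sideSum T g s(a,b) b + sideSum T g s(a,b) b) := by rw [this, add_zero]
    _ = (sideSum T g s(a,b) a + sideSum T g s(a,b) b) + sideSum T g s(a,b) b := by ring
    _ = sideSum T g s(a,b) b := by rw [h1, zero_add]

lemma mem_solidSet {a b} (h : T.G.Adj a b) {g : Fin n → K} (hg : ∑ i, g i = 0) :
    s(a,b) ∈ solidSet T g ↔ sideSum T g s(a,b) b ≠ 0 := by
  constructor
  · rintro ⟨he, v, hv, hs⟩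
    rw [Sym2.mem_iff] at hv
    rcases hv with rfl | rfl
    · rwa [show (∑ i : Fin n, if (T.G.deleteEdges {s(v,b)}).Reachable v (Sum.inl i) then g i else 0)
          = sideSum T g s(v,b) v from rfl, sideSum_symm T h hg] at hs
    · exact hs
  · intro hs
    exact ⟨h, b, Sym2.mem_mk_right a b, hs⟩


lemma mem_incident {v : Fin n ⊕ Fin (n-2)} {e} (he : e ∈ T.G.edgeSet) (hv : v ∈ e) :
    ∃ u, T.G.Adj v u ∧ e = s(v,u) := by
  induction e with
  | _ a b =>
    rw [Sym2.mem_iff] at hv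
    rw [SimpleGraph.mem_edgeSet] at he
    rcases hv with rfl | rfl
    · exact ⟨b, he, rfl⟩
    · exact ⟨a, he.symm, Sym2.eq_swap⟩

lemma branch_eu (j w : Fin n ⊕ Fin (n-2)) (hw : w ≠ j) :
    ∃ u, T.G.Adj j u ∧ (T.G.deleteEdges {s(j,u)}).Reachable u w ∧
      ∀ u', T.G.Adj j u' → (T.G.deleteEdges {s(j,u')}).Reachable u' w → u' = u := by
  obtain ⟨p, hp, -⟩ := T.isTree.existsUnique_path j w
  cases p with
  | nil => exact absurd rfl hw.symm
  | @cons _ u _ h q =>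
    rw [SimpleGraph.Walk.cons_isPath_iff] at hp
    obtain ⟨hq, hjq⟩ := hp
    have hqe : ∀ e' ∈ q.edges, j ∉ e' := by
      intro e' he' hje'
      induction e' with
      | _ c d =>
        rw [Sym2.mem_iff] at hje'
        rcases hje' with rfl | rfl
        · exact hjq (q.fst_mem_support_of_mem_edges he')
        · exact hjq (q.snd_mem_support_of_mem_edges he')
    have hreach : ∀ u', (T.G.deleteEdges {s(j,u')}).Reachable u w := by
      intro u'
      refine ⟨q.toDeleteEdges _ ?_⟩
      intro e' he'
      simp only [Set.mem_singleton_iff]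
      intro hcontra
      exact hqe e' he' (hcontra ▸ Sym2.mem_mk_left j u')
    refine ⟨u, h, hreach u, ?_⟩
    intro u' hadj' hr'
    by_contra hne
    have hadjdel : (T.G.deleteEdges {s(j,u')}).Adj j u := by
      rw [SimpleGraph.deleteEdges_adj]
      refine ⟨h, ?_⟩
      simp only [Set.mem_singleton_iff, Sym2.eq_iff]
      rintro (⟨-, rfl⟩ | ⟨rfl, rfl⟩)
      · exact hne rfl
      · exact T.G.irrefl hadj'
    have : (T.G.deleteEdges {s(j,u')}).Reachable j u' :=
      (hadjdel.reachable.trans (hreach u')).trans hr'.symm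
    exact not_reach T hadj' this

lemma forward (g : Fin n → K) (hg : ∑ i, g i = 0) : IsSubforest T (solidSet T g) := by
  refine ⟨fun e he => he.1, fun j => ?_⟩
  intro hcard
  rw [Set.ncard_eq_one] at hcard
  obtain ⟨e₀, he₀⟩ := hcard
  have he₀m : e₀ ∈ {e ∈ solidSet T g | Sum.inr j ∈ e} := by rw [he₀]; rfl
  obtain ⟨hs₀, hj₀⟩ := he₀m
  obtain ⟨u₀, hadj₀, rfl⟩ := mem_incident T hs₀.1 hj₀
  set J := (Sum.inr j : Fin n ⊕ Fin (n-2)) with hJ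
  set Nfin := (Set.toFinite (T.G.neighborSet J)).toFinset with hNfin
  have hmemN : ∀ u, u ∈ Nfin ↔ T.G.Adj J u := by
    intro u; rw [hNfin, Set.Finite.mem_toFinset, SimpleGraph.mem_neighborSet]
  have hsum : ∑ u ∈ Nfin, sideSum T g s(J,u) u = ∑ i, g i := by
    unfold sideSum
    rw [Finset.sum_comm]
    refine Finset.sum_congr rfl fun i _ => ?_
    obtain ⟨u, hu, hr, huniq⟩ := branch_eu T J (Sum.inl i) (by simp)
    rw [Finset.sum_eq_single_of_mem u ((hmemN u).mpr hu)]
    · rw [if_pos hr]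
    · intro u' hu' hne
      rw [if_neg]
      intro hr'
      exact hne (huniq u' ((hmemN u').mp hu') hr')
  have hzero : ∀ u ∈ Nfin, u ≠ u₀ → sideSum T g s(J,u) u = 0 := by
    intro u hu hne
    by_contra hns
    have hmem : s(J,u) ∈ {e ∈ solidSet T g | J ∈ e} :=
      ⟨(mem_solidSet T ((hmemN u).mp hu) hg).mpr hns, Sym2.mem_mk_left J u⟩
    rw [he₀] at hmem
    rw [Set.mem_singleton_iff, Sym2.eq_iff] at hmem
    rcases hmem with ⟨-, h2⟩ | ⟨h1, h2⟩
    · exact hne h2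
    · exact T.G.irrefl (h1 ▸ hadj₀)
  have hfin : ∑ u ∈ Nfin, sideSum T g s(J,u) u = sideSum T g s(J,u₀) u₀ := by
    refine Finset.sum_eq_single_of_mem u₀ ((hmemN u₀).mpr hadj₀) ?_
    intro u hu hne
    exact hzero u hu hne
  have hne₀ : sideSum T g s(J,u₀) u₀ ≠ 0 := (mem_solidSet T hadj₀ hg).mp hs₀
  rw [hsum, hg] at hfin
  exact hne₀ hfin.symm


def rho {n : ℕ} (hn : 0 < n) : Fin n ⊕ Fin (n-2) := Sum.inl ⟨0, hn⟩

variable (hn : 0 < n)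

noncomputable def pthR (v : Fin n ⊕ Fin (n-2)) : T.G.Walk v (rho hn) :=
  (T.isTree.existsUnique_path v (rho hn)).choose

lemma pthR_isPath (v) : (pthR T hn v).IsPath :=
  (T.isTree.existsUnique_path v (rho hn)).choose_spec.1

lemma pthR_unique {v} (q : T.G.Walk v (rho hn)) (hq : q.IsPath) : q = pthR T hn v :=
  (T.isTree.existsUnique_path v (rho hn)).choose_spec.2 q hq

lemma pthR_rho : pthR T hn (rho hn) = SimpleGraph.Walk.nil :=
  (pthR_unique T hn _ SimpleGraph.Walk.IsPath.nil).symm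

noncomputable def depth (v : Fin n ⊕ Fin (n-2)) : ℕ := (pthR T hn v).length

noncomputable def parent (v : Fin n ⊕ Fin (n-2)) : Fin n ⊕ Fin (n-2) :=
  (pthR T hn v).getVert 1

lemma pthR_not_nil {v} (hv : v ≠ rho hn) : ¬(pthR T hn v).Nil :=
  SimpleGraph.Walk.not_nil_of_ne hv

lemma adj_parent {v} (hv : v ≠ rho hn) : T.G.Adj v (parent T hn v) :=
  SimpleGraph.Walk.adj_snd (pthR_not_nil T hn hv)

lemma pthR_parent {v} (hv : v ≠ rho hn) :
    pthR T hn (parent T hn v) = (pthR T hn v).tail :=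
  (pthR_unique T hn _ (pthR_isPath T hn v).tail).symm

lemma depth_parent {v} (hv : v ≠ rho hn) :
    depth T hn (parent T hn v) + 1 = depth T hn v := by
  rw [depth, depth, pthR_parent T hn hv]
  exact SimpleGraph.Walk.length_tail_add_one (pthR_not_nil T hn hv)

lemma depth_parent_lt {v} (hv : v ≠ rho hn) :
    depth T hn (parent T hn v) < depth T hn v := by
  have := depth_parent T hn hv; omega

lemma parent_or {v w} (hadj : T.G.Adj v w) :
    (w = parent T hn v ∧ depth T hn v = depth T hn w + 1) ∨
    (v = parent T hn w ∧ depth T hn w = depth T hn v + 1) := by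
  rcases Classical.em (w ∈ (pthR T hn v).support) with hw | hw
  · left
    have hvr : v ≠ rho hn := by
      rintro rfl
      rw [pthR_rho] at hw
      simp only [SimpleGraph.Walk.support_nil, List.mem_singleton] at hw
      exact hadj.ne hw.symm
    have ht := (pthR_isPath T hn v).takeUntil hw
    have hcons : (SimpleGraph.Walk.cons hadj SimpleGraph.Walk.nil).IsPath := by
      rw [SimpleGraph.Walk.cons_isPath_iff]
      refine ⟨SimpleGraph.Walk.IsPath.nil, ?_⟩
      simp [hadj.ne]
    obtain ⟨p₀, -, hup⟩ := T.isTree.existsUnique_path v w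
    have heq : (pthR T hn v).takeUntil w hw = SimpleGraph.Walk.cons hadj SimpleGraph.Walk.nil :=
      (hup _ ht).trans (hup _ hcons).symm
    have hspec := (pthR T hn v).take_spec hw
    have hrep : pthR T hn v = SimpleGraph.Walk.cons hadj ((pthR T hn v).dropUntil w hw) := by
      rw [heq] at hspec
      conv_lhs => rw [← hspec]
      simp
    have hpar : parent T hn v = w := by
      rw [parent, hrep]
      simp
    constructor
    · exact hpar.symm
    · have := depth_parent T hn hvr
      rw [hpar] at this
      omega
  · right
    have hcons : (SimpleGraph.Walk.cons hadj.symm (pthR T hn v)).IsPath :=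
      (pthR_isPath T hn v).cons hw
    have hh := pthR_unique T hn _ hcons
    constructor
    · rw [parent, ← hh]
      simp
    · rw [depth, depth, ← hh]
      simp


lemma depth_rho : depth T hn (rho hn) = 0 := by
  rw [depth, pthR_rho]; rfl

lemma ne_rho_of_depth {v} (hv : depth T hn v ≠ 0) : v ≠ rho hn := by
  rintro rfl; exact hv (depth_rho T hn)

def o1 (x : K) : K := if x = (1,0) then (0,1) else (1,0)
def o2 (x : K) : K := if x = (1,1) then (0,1) else (1,1)

lemma o1_ne : ∀ x : K, o1 x ≠ 0 := by decide
lemma o2_ne : ∀ x : K, o2 x ≠ 0 := by decide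
lemma o12_sum : ∀ x : K, x ≠ 0 → x + o1 x + o2 x = 0 := by decide

noncomputable def pick (b b' fst : Prop) (x : K) : K :=
  if b then (if x = 0 then ((1 : ZMod 2), (0 : ZMod 2))
    else if b' then (if fst then o1 x else o2 x) else x) else 0

lemma pick_ne_iff (b b' fst : Prop) (x : K) : pick b b' fst x ≠ 0 ↔ b := by
  unfold pick
  split_ifs with hb h0 hb' hf
  · simpa [hb] using (by decide : ((1:ZMod 2),(0:ZMod 2)) ≠ (0 : K))
  · simpa [hb] using o1_ne x
  · simpa [hb] using o2_ne x
  · simpa [hb] using h0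
  · simpa [hb]

def ord : Fin n ⊕ Fin (n-2) → ℕ
  | .inl i => i.1
  | .inr j => n + j.1

lemma ord_inj {v w : Fin n ⊕ Fin (n-2)} (h : ord v = ord w) : v = w := by
  cases v with
  | inl i => cases w with
    | inl i' => simp only [ord] at h; exact congrArg Sum.inl (Fin.ext h)
    | inr j' => simp only [ord] at h; exact absurd h (by omega)
  | inr j => cases w with
    | inl i' => simp only [ord] at h; exact absurd h (by have := i'.2; omega)
    | inr j' => simp only [ord] at h; exact congrArg Sum.inr (Fin.ext (by omega))

lemma inl_lt {i : Fin n} : (ord (Sum.inl i : Fin n ⊕ Fin (n-2))) < n := i.2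

noncomputable def pedge (v : Fin n ⊕ Fin (n-2)) : Sym2 (Fin n ⊕ Fin (n-2)) :=
  s(v, parent T hn v)

noncomputable def sibFinset (w : Fin n ⊕ Fin (n-2)) : Finset (Fin n ⊕ Fin (n-2)) :=
  Finset.univ.filter (fun u => T.G.Adj (parent T hn w) u ∧ u ≠ w ∧
    u ≠ parent T hn (parent T hn w))

variable (F : Set (Sym2 (Fin n ⊕ Fin (n-2))))

noncomputable def bsib (w : Fin n ⊕ Fin (n-2)) : Prop :=
  ∃ u ∈ sibFinset T hn w, s(parent T hn w, u) ∈ F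

noncomputable def isFirst (w : Fin n ⊕ Fin (n-2)) : Prop :=
  ∀ u ∈ sibFinset T hn w, ord w ≤ ord u

noncomputable def lab (w : Fin n ⊕ Fin (n-2)) : K :=
  if h : w = rho hn then 0
  else pick (pedge T hn w ∈ F) (bsib T hn F w) (isFirst T hn w)
    (lab (parent T hn w))
termination_by depth T hn w
decreasing_by exact depth_parent_lt T hn h

lemma lab_eq {w} (hw : w ≠ rho hn) :
    lab T hn F w = pick (pedge T hn w ∈ F) (bsib T hn F w) (isFirst T hn w)
      (lab T hn F (parent T hn w)) := by
  conv_lhs => rw [lab]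
  rw [dif_neg hw]

lemma lab_ne_iff {w} (hw : w ≠ rho hn) :
    lab T hn F w ≠ 0 ↔ pedge T hn w ∈ F := by
  rw [lab_eq T hn F hw, pick_ne_iff]

noncomputable def flab : Sym2 (Fin n ⊕ Fin (n-2)) → K := fun e =>
  if e ∈ T.G.edgeSet then
    Sym2.lift ⟨fun a b =>
      if depth T hn a < depth T hn b then lab T hn F b
      else if depth T hn b < depth T hn a then lab T hn F a else 0, by
        intro a b
        dsimp only
        split_ifs <;> first | rfl | omega⟩ e
  else 0

lemma flab_eq {a b} (he : s(a,b) ∈ T.G.edgeSet)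
    (hd : depth T hn b = depth T hn a + 1) :
    flab T hn F s(a,b) = lab T hn F b := by
  rw [flab, if_pos he, Sym2.lift_mk]
  dsimp only
  rw [if_pos (by omega : depth T hn a < depth T hn b)]

lemma flab_not_edge {e} (he : e ∉ T.G.edgeSet) : flab T hn F e = 0 := by
  rw [flab, if_neg he]

lemma edge_form {e} (he : e ∈ T.G.edgeSet) :
    ∃ a b, e = s(a,b) ∧ T.G.Adj a b ∧ a = parent T hn b ∧
      depth T hn b = depth T hn a + 1 := by
  induction e with
  | _ x y =>
    have hadj : T.G.Adj x y := he
    rcases parent_or T hn hadj with ⟨h1, h2⟩ | ⟨h1, h2⟩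
    · exact ⟨y, x, Sym2.eq_swap.symm, hadj.symm, h1, h2⟩
    · exact ⟨x, y, rfl, hadj, h1, h2⟩

lemma flab_ne_iff {e} (he : e ∈ T.G.edgeSet) :
    flab T hn F e ≠ 0 ↔ e ∈ F := by
  obtain ⟨a, b, rfl, hadj, hpar, hd⟩ := edge_form T hn he
  have hb : b ≠ rho hn := ne_rho_of_depth T hn (by omega)
  rw [flab_eq T hn F he hd, lab_ne_iff T hn F hb]
  have : pedge T hn b = s(a,b) := by rw [pedge, ← hpar]; exact Sym2.eq_swap
  rw [this]


noncomputable def edgeFin : Finset (Sym2 (Fin n ⊕ Fin (n-2))) :=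
  (Set.toFinite T.G.edgeSet).toFinset

lemma mem_edgeFin {e} : e ∈ edgeFin T ↔ e ∈ T.G.edgeSet := Set.Finite.mem_toFinset _

noncomputable def vsum (f : Sym2 (Fin n ⊕ Fin (n-2)) → K) (v : Fin n ⊕ Fin (n-2)) : K :=
  ∑ e ∈ edgeFin T, if v ∈ e then f e else 0

lemma dc (f : Sym2 (Fin n ⊕ Fin (n-2)) → K) (S : Finset (Fin n ⊕ Fin (n-2))) :
    ∑ v ∈ S, vsum T f v = ∑ e ∈ edgeFin T, (S.filter (· ∈ e)).card • f e := by
  unfold vsum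
  rw [Finset.sum_comm]
  refine Finset.sum_congr rfl fun e _ => ?_
  rw [← Finset.sum_filter, Finset.sum_const]

lemma inr_ne_rho (j : Fin (n-2)) : (Sum.inr j : Fin n ⊕ Fin (n-2)) ≠ rho hn := by
  simp [rho]

lemma internal_str (j : Fin (n-2)) :
    ∃ w1 w2 : Fin n ⊕ Fin (n-2), w1 ≠ w2 ∧ w1 ≠ parent T hn (Sum.inr j) ∧
      w2 ≠ parent T hn (Sum.inr j) ∧
      T.G.neighborSet (Sum.inr j) = {parent T hn (Sum.inr j), w1, w2} := by
  have hpmem : parent T hn (Sum.inr j) ∈ T.G.neighborSet (Sum.inr j) :=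
    adj_parent T hn (inr_ne_rho hn j)
  have hdiff : (T.G.neighborSet (Sum.inr j) \ {parent T hn (Sum.inr j)}).ncard = 2 := by
    rw [Set.ncard_diff_singleton_of_mem hpmem, T.degInternal j]
  obtain ⟨w1, w2, hne, hset⟩ := Set.ncard_eq_two.mp hdiff
  have hw1 : w1 ∈ T.G.neighborSet (Sum.inr j) \ {parent T hn (Sum.inr j)} := by
    rw [hset]; exact Set.mem_insert _ _
  have hw2 : w2 ∈ T.G.neighborSet (Sum.inr j) \ {parent T hn (Sum.inr j)} := by
    rw [hset]; exact Set.mem_insert_of_mem _ rfl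
  refine ⟨w1, w2, hne, hw1.2, hw2.2, ?_⟩
  have hins : insert (parent T hn (Sum.inr j))
      (T.G.neighborSet (Sum.inr j) \ {parent T hn (Sum.inr j)}) =
      T.G.neighborSet (Sum.inr j) := by
    rw [Set.insert_diff_singleton, Set.insert_eq_self.mpr hpmem]
  rw [← hins, hset]

lemma child_par {j : Fin (n-2)} {w} (hadj : T.G.Adj (Sum.inr j) w)
    (hne : w ≠ parent T hn (Sum.inr j)) :
    parent T hn w = Sum.inr j ∧ depth T hn w = depth T hn (Sum.inr j) + 1 := by
  rcases parent_or T hn hadj with ⟨h1, -⟩ | ⟨h1, h2⟩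
  · exact absurd h1 hne
  · exact ⟨h1.symm, h2⟩

lemma sib_eq {j : Fin (n-2)} {w1 w2}
    (hN : T.G.neighborSet (Sum.inr j) = {parent T hn (Sum.inr j), w1, w2})
    (hpw1 : parent T hn w1 = Sum.inr j) (h12 : w1 ≠ w2)
    (hw2p : w2 ≠ parent T hn (Sum.inr j)) : sibFinset T hn w1 = {w2} := by
  ext u
  simp only [sibFinset, Finset.mem_filter, Finset.mem_univ, true_and, Finset.mem_singleton]
  rw [hpw1]
  constructor
  · rintro ⟨hadj, hu1, hup⟩
    have hu : u ∈ T.G.neighborSet (Sum.inr j) := hadj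
    rw [hN] at hu
    rcases hu with rfl | rfl | rfl
    · exact absurd rfl hup
    · exact absurd rfl hu1
    · rfl
  · rintro rfl
    refine ⟨?_, Ne.symm h12, hw2p⟩
    have : u ∈ T.G.neighborSet (Sum.inr j) := by
      rw [hN]
      exact Set.mem_insert_of_mem _ (Set.mem_insert_of_mem _ rfl)
    exact this


lemma pick_of_not {b b' f : Prop} {x : K} (h : ¬b) : pick b b' f x = 0 := by
  rw [pick, if_neg h]

lemma pick_of_zero {b b' f : Prop} {x : K} (hb : b) (hx : x = 0) :
    pick b b' f x = ((1 : ZMod 2), (0 : ZMod 2)) := by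
  rw [pick, if_pos hb, if_pos hx]

lemma pick_single {b b' f : Prop} {x : K} (hb : b) (hb' : ¬b') (hx : x ≠ 0) :
    pick b b' f x = x := by
  rw [pick, if_pos hb, if_neg hx, if_neg hb']

lemma pick_fst {b b' f : Prop} {x : K} (hb : b) (hb' : b') (hf : f) (hx : x ≠ 0) :
    pick b b' f x = o1 x := by
  rw [pick, if_pos hb, if_neg hx, if_pos hb', if_pos hf]

lemma pick_snd {b b' f : Prop} {x : K} (hb : b) (hb' : b') (hf : ¬f) (hx : x ≠ 0) :
    pick b b' f x = o2 x := by
  rw [pick, if_pos hb, if_neg hx, if_pos hb', if_neg hf]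

lemma vsum_internal (hF : IsSubforest T F) (j : Fin (n-2)) :
    vsum T (flab T hn F) (Sum.inr j) = 0 := by
  set J := (Sum.inr j : Fin n ⊕ Fin (n-2)) with hJdef
  obtain ⟨w1, w2, h12, hw1p, hw2p, hN⟩ := internal_str T hn j
  set p := parent T hn J with hpdef
  have hJr : J ≠ rho hn := inr_ne_rho hn j
  have hadjp : T.G.Adj J p := adj_parent T hn hJr
  have hadj1 : T.G.Adj J w1 := by
    have : w1 ∈ T.G.neighborSet J := by
      rw [hN]; exact Set.mem_insert_of_mem _ (Set.mem_insert _ _)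
    exact this
  have hadj2 : T.G.Adj J w2 := by
    have : w2 ∈ T.G.neighborSet J := by
      rw [hN]; exact Set.mem_insert_of_mem _ (Set.mem_insert_of_mem _ rfl)
    exact this
  obtain ⟨hpw1, hd1⟩ := child_par T hn hadj1 hw1p
  obtain ⟨hpw2, hd2⟩ := child_par T hn hadj2 hw2p
  have hdp : depth T hn J = depth T hn p + 1 := (depth_parent T hn hJr).symm
  have hw1r : w1 ≠ rho hn := ne_rho_of_depth T hn (by omega)
  have hw2r : w2 ≠ rho hn := ne_rho_of_depth T hn (by omega)
  -- flab values
  have hf0 : flab T hn F s(J,p) = lab T hn F J := by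
    rw [show s(J,p) = s(p,J) from Sym2.eq_swap]
    exact flab_eq T hn F hadjp.symm hdp
  have hf1 : flab T hn F s(J,w1) = lab T hn F w1 := flab_eq T hn F hadj1 hd1
  have hf2 : flab T hn F s(J,w2) = lab T hn F w2 := flab_eq T hn F hadj2 hd2
  -- pedges
  have hpe0 : pedge T hn J = s(J,p) := by rw [pedge, ← hpdef]
  have hpe1 : pedge T hn w1 = s(J,w1) := by rw [pedge, hpw1]; exact Sym2.eq_swap
  have hpe2 : pedge T hn w2 = s(J,w2) := by rw [pedge, hpw2]; exact Sym2.eq_swap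
  -- sibling data
  have hN' : T.G.neighborSet J = {p, w2, w1} := by rw [hN, Set.pair_comm w1 w2]
  have hsib1 : sibFinset T hn w1 = {w2} := sib_eq T hn hN hpw1 h12 hw2p
  have hsib2 : sibFinset T hn w2 = {w1} := sib_eq T hn hN' hpw2 h12.symm hw1p
  have hbs1 : bsib T hn F w1 = (s(J,w2) ∈ F) := by
    rw [bsib, hsib1]
    apply propext
    simp [hpw1]
    exact Iff.rfl
  have hbs2 : bsib T hn F w2 = (s(J,w1) ∈ F) := by
    rw [bsib, hsib2]
    apply propext
    simp [hpw2]
    exact Iff.rfl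
  have hif1 : isFirst T hn w1 = (ord w1 ≤ ord w2) := by
    rw [isFirst, hsib1]
    apply propext
    simp
  have hif2 : isFirst T hn w2 = (ord w2 ≤ ord w1) := by
    rw [isFirst, hsib2]
    apply propext
    simp
  set x := lab T hn F J with hxdef
  have hlab1 : lab T hn F w1 = pick (s(J,w1) ∈ F) (s(J,w2) ∈ F) (ord w1 ≤ ord w2) x := by
    rw [lab_eq T hn F hw1r, hpw1, hpe1, hbs1, hif1]
  have hlab2 : lab T hn F w2 = pick (s(J,w2) ∈ F) (s(J,w1) ∈ F) (ord w2 ≤ ord w1) x := by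
    rw [lab_eq T hn F hw2r, hpw2, hpe2, hbs2, hif2]
  have hx : x ≠ 0 ↔ s(J,p) ∈ F := by
    rw [hxdef, lab_ne_iff T hn F hJr, hpe0]
  -- incident filter
  have hne01 : s(J,p) ≠ s(J,w1) := by
    intro hq
    rw [Sym2.eq_iff] at hq
    rcases hq with ⟨-, h2⟩ | ⟨h1, -⟩
    · exact hw1p h2.symm
    · exact hadj1.ne h1
  have hne02 : s(J,p) ≠ s(J,w2) := by
    intro hq
    rw [Sym2.eq_iff] at hq
    rcases hq with ⟨-, h2⟩ | ⟨h1, -⟩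
    · exact hw2p h2.symm
    · exact hadj2.ne h1
  have hne12 : s(J,w1) ≠ s(J,w2) := by
    intro hq
    rw [Sym2.eq_iff] at hq
    rcases hq with ⟨-, h2⟩ | ⟨h1, -⟩
    · exact h12 h2
    · exact hadj2.ne h1
  have hfilter : (edgeFin T).filter (fun e => J ∈ e) = {s(J,p), s(J,w1), s(J,w2)} := by
    ext e
    simp only [Finset.mem_filter, mem_edgeFin, Finset.mem_insert, Finset.mem_singleton]
    constructor
    · rintro ⟨he, hJe⟩
      obtain ⟨u, hadj, rfl⟩ := mem_incident T he hJe
      have hu : u ∈ T.G.neighborSet J := hadj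
      rw [hN] at hu
      rcases hu with rfl | rfl | rfl
      · exact Or.inl rfl
      · exact Or.inr (Or.inl rfl)
      · exact Or.inr (Or.inr rfl)
    · rintro (rfl | rfl | rfl)
      · exact ⟨hadjp, Sym2.mem_mk_left _ _⟩
      · exact ⟨hadj1, Sym2.mem_mk_left _ _⟩
      · exact ⟨hadj2, Sym2.mem_mk_left _ _⟩
  have hclass : ∀ e, e ∈ F → J ∈ e → e = s(J,p) ∨ e = s(J,w1) ∨ e = s(J,w2) := by
    intro e heF heJ
    have he : e ∈ T.G.edgeSet := hF.1 heF
    obtain ⟨u, hadj, rfl⟩ := mem_incident T he heJ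
    have hu : u ∈ T.G.neighborSet J := hadj
    rw [hN] at hu
    rcases hu with rfl | rfl | rfl
    · exact Or.inl rfl
    · exact Or.inr (Or.inl rfl)
    · exact Or.inr (Or.inr rfl)
  have hsingle : ∀ e₀ : Sym2 (Fin n ⊕ Fin (n-2)), e₀ ∈ F → J ∈ e₀ →
      (∀ e, e ∈ F → J ∈ e → e = e₀) → False := by
    intro e₀ h1 h2 h3
    refine hF.2 j (Set.ncard_eq_one.mpr ⟨e₀, Set.ext fun e => ?_⟩)
    constructor
    · rintro ⟨heF, heJ⟩
      exact h3 e heF heJ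
    · rintro rfl
      exact ⟨h1, h2⟩
  -- compute the sum
  rw [vsum, show (∑ e ∈ edgeFin T, if J ∈ e then flab T hn F e else 0)
      = ∑ e ∈ (edgeFin T).filter (fun e => J ∈ e), flab T hn F e from
      (Finset.sum_filter _ _).symm, hfilter]
  rw [Finset.sum_insert (by simp [hne01, hne02]),
      Finset.sum_insert (by simp [hne12]), Finset.sum_singleton]
  rw [hf0, hf1, hf2, hlab1, hlab2]
  by_cases hb1 : s(J,w1) ∈ F <;> by_cases hb2 : s(J,w2) ∈ F <;>
    by_cases hb0 : s(J,p) ∈ F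
  · -- all three
    have hxne : x ≠ 0 := hx.mpr hb0
    rcases le_or_gt (ord w1) (ord w2) with h | h
    · have h2 : ¬(ord w2 ≤ ord w1) := fun hh => h12 (ord_inj (le_antisymm h hh))
      rw [pick_fst hb1 hb2 h hxne, pick_snd hb2 hb1 h2 hxne, ← add_assoc]
      exact o12_sum x hxne
    · have h1 : ¬(ord w1 ≤ ord w2) := not_le.mpr h
      rw [pick_snd hb1 hb2 h1 hxne, pick_fst hb2 hb1 h.le hxne]
      rw [add_comm (o2 x) (o1 x), ← add_assoc]
      exact o12_sum x hxne
  · -- w1, w2 in F, p not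
    have hx0 : x = 0 := not_not.mp (fun hxx => hb0 (hx.mp hxx))
    rw [pick_of_zero hb1 hx0, pick_of_zero hb2 hx0, hx0, zero_add]
    exact addself _
  · -- w1, p in F
    have hxne : x ≠ 0 := hx.mpr hb0
    rw [pick_single hb1 hb2 hxne, pick_of_not hb2, add_zero]
    exact addself x
  · -- only w1 : contradiction
    exact absurd (hsingle s(J,w1) hb1 (Sym2.mem_mk_left _ _) (by
      intro e heF heJ
      rcases hclass e heF heJ with rfl | rfl | rfl
      · exact absurd heF hb0
      · rfl
      · exact absurd heF hb2)) id
  · -- w2, p in F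
    have hxne : x ≠ 0 := hx.mpr hb0
    rw [pick_single hb2 hb1 hxne, pick_of_not hb1, zero_add]
    exact addself x
  · -- only w2 : contradiction
    exact absurd (hsingle s(J,w2) hb2 (Sym2.mem_mk_left _ _) (by
      intro e heF heJ
      rcases hclass e heF heJ with rfl | rfl | rfl
      · exact absurd heF hb0
      · exact absurd heF hb1
      · rfl)) id
  · -- only p : contradiction
    exact absurd (hsingle s(J,p) hb0 (Sym2.mem_mk_left _ _) (by
      intro e heF heJ
      rcases hclass e heF heJ with rfl | rfl | rfl
      · rfl
      · exact absurd heF hb1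
      · exact absurd heF hb2)) id
  · -- none
    have hx0 : x = 0 := not_not.mp (fun hxx => hb0 (hx.mp hxx))
    rw [pick_of_not hb1, pick_of_not hb2, hx0]
    simp


lemma two_terms_zero {e} (he : e ∈ edgeFin T) (f : Sym2 (Fin n ⊕ Fin (n-2)) → K) :
    (Finset.univ.filter (· ∈ e)).card • f e = 0 := by
  rw [mem_edgeFin] at he
  revert he
  induction e with
  | _ a b =>
    intro he
    have hne : a ≠ b := T.G.ne_of_adj he
    have heq : (Finset.univ.filter (· ∈ s(a,b))) = {a, b} := by
      ext v
      simp [Sym2.mem_iff]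
    rw [heq, Finset.card_pair hne, two_nsmul]
    exact addself _

lemma sumg (hF : IsSubforest T F) :
    ∑ i, vsum T (flab T hn F) (Sum.inl i) = 0 := by
  have hDC := dc T (flab T hn F) Finset.univ
  rw [Fintype.sum_sum_type] at hDC
  rw [Finset.sum_congr rfl (fun j _ => vsum_internal T hn F hF j)] at hDC
  rw [Finset.sum_const, smul_zero, add_zero] at hDC
  rw [hDC]
  exact Finset.sum_eq_zero (fun e he => two_terms_zero T he _)

lemma sideSum_flab (hF : IsSubforest T F) {a b} (hadj : T.G.Adj a b) :
    sideSum T (fun i => vsum T (flab T hn F) (Sum.inl i)) s(a,b) b = flab T hn F s(a,b) := by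
  set f := flab T hn F with hf
  set S : Finset (Fin n ⊕ Fin (n-2)) :=
    Finset.univ.filter (fun w => (T.G.deleteEdges {s(a,b)}).Reachable b w) with hS
  have h1 : ∑ v ∈ S, vsum T f v
      = sideSum T (fun i => vsum T f (Sum.inl i)) s(a,b) b := by
    rw [hS, Finset.sum_filter, Fintype.sum_sum_type]
    have h2 : ∀ j : Fin (n-2),
        (if (T.G.deleteEdges {s(a,b)}).Reachable b (Sum.inr j) then vsum T f (Sum.inr j)
          else 0) = 0 := by
      intro j
      split_ifs
      · exact vsum_internal T hn F hF j
      · rfl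
    rw [Finset.sum_congr rfl (fun j _ => h2 j), Finset.sum_const, smul_zero, add_zero]
    rfl
  rw [← h1, dc T f S]
  have hmem : s(a,b) ∈ edgeFin T := (mem_edgeFin T).mpr hadj
  have hside : ∀ e' ∈ edgeFin T, e' ≠ s(a,b) → (S.filter (· ∈ e')).card • f e' = 0 := by
    intro e' he' hne
    rw [mem_edgeFin] at he'
    revert he' hne
    induction e' with
    | _ c d =>
      intro he' hne
      have hadj' : T.G.Adj c d := he'
      have hdel : (T.G.deleteEdges {s(a,b)}).Adj c d := by
        rw [SimpleGraph.deleteEdges_adj]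
        exact ⟨hadj', by simpa using hne⟩
      by_cases hrc : (T.G.deleteEdges {s(a,b)}).Reachable b c
      · have hrd : (T.G.deleteEdges {s(a,b)}).Reachable b d := hrc.trans hdel.reachable
        have heq : S.filter (· ∈ s(c,d)) = {c, d} := by
          ext v
          simp only [hS, Finset.mem_filter, Finset.mem_univ, true_and, Sym2.mem_iff,
            Finset.mem_insert, Finset.mem_singleton]
          constructor
          · rintro ⟨-, h⟩; exact h
          · rintro (rfl | rfl)
            · exact ⟨hrc, Or.inl rfl⟩
            · exact ⟨hrd, Or.inr rfl⟩
        rw [heq, Finset.card_pair hadj'.ne, two_nsmul]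
        exact addself _
      · have hrd : ¬ (T.G.deleteEdges {s(a,b)}).Reachable b d := fun h =>
          hrc (h.trans hdel.symm.reachable)
        have heq : S.filter (· ∈ s(c,d)) = ∅ := by
          ext v
          simp only [hS, Finset.mem_filter, Finset.mem_univ, true_and, Sym2.mem_iff,
            Finset.notMem_empty, iff_false, not_and, not_or]
          intro hr
          exact ⟨fun h => hrc (h ▸ hr), fun h => hrd (h ▸ hr)⟩
        rw [heq]
        simp
  rw [Finset.sum_eq_single_of_mem _ hmem hside]
  have heq : S.filter (· ∈ s(a,b)) = {b} := by
    ext v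
    simp only [hS, Finset.mem_filter, Finset.mem_univ, true_and, Sym2.mem_iff,
      Finset.mem_singleton]
    constructor
    · rintro ⟨hr, (rfl | rfl)⟩
      · exact absurd hr.symm (not_reach T hadj)
      · rfl
    · rintro rfl
      exact ⟨SimpleGraph.Reachable.refl _, Or.inr rfl⟩
  rw [heq, Finset.card_singleton, one_nsmul]

lemma solid_eq (hF : IsSubforest T F) :
    solidSet T (fun i => vsum T (flab T hn F) (Sum.inl i)) = F := by
  have hg0 := sumg T hn F hF
  ext e
  constructor
  · intro hmem
    have he := hmem.1
    obtain ⟨a, b, rfl, hadj, -, -⟩ := edge_form T hn he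
    have hss := (mem_solidSet T hadj hg0).mp hmem
    rw [sideSum_flab T hn F hF hadj] at hss
    exact (flab_ne_iff T hn F he).mp hss
  · intro heF
    have he := hF.1 heF
    obtain ⟨a, b, rfl, hadj, -, -⟩ := edge_form T hn he
    refine (mem_solidSet T hadj hg0).mpr ?_
    rw [sideSum_flab T hn F hF hadj]
    exact (flab_ne_iff T hn F he).mpr heF

end JC

/-- The distinct nontrivial Fourier coordinates of the Jukes-Cantor model on a
binary tree `T` are in bijection with the subforests of `T`: the 0-1 exponent
vectors (encoded by their sets of solid edges) arising from leaf states in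
`ℤ₂ × ℤ₂` summing to the identity are exactly the subforests of `T`; in
particular their number equals the number of subforests. -/
theorem fourier_coordinates_subforests (n : ℕ) (hn : 3 ≤ n) (T : BinTree n) :
    {F | ∃ g : Fin n → ZMod 2 × ZMod 2, (∑ i : Fin n, g i) = 0 ∧ F = solidSet T g}
      = {F | IsSubforest T F} ∧
    {F | ∃ g : Fin n → ZMod 2 × ZMod 2, (∑ i : Fin n, g i) = 0 ∧ F = solidSet T g}.ncard
      = {F | IsSubforest T F}.ncard := by
  have hn0 : 0 < n := by omega
  have hmain : {F | ∃ g : Fin n → ZMod 2 × ZMod 2, (∑ i : Fin n, g i) = 0 ∧ F = solidSet T g}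
      = {F | IsSubforest T F} := by
    ext F
    constructor
    · rintro ⟨g, hg0, rfl⟩
      exact JC.forward T g hg0
    · intro hF
      exact ⟨fun i => JC.vsum T (JC.flab T hn0 F) (Sum.inl i), JC.sumg T hn0 F hF,
        (JC.solid_eq T hn0 F hF).symm⟩
  exact ⟨hmain, by rw [hmain]⟩
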